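/- ℒ₂-gain bound from the differential dissipation inequality: Let P be a real symmetric positive definite n×n matrix, γ > 0 a real number, x : [0,∞) → ℝⁿ a differentiable function, and z : [0,∞) → ℝˡ, w : [0,∞) → ℝ^q continuous functions such that for all t ≥ 0 the derivative of t ↦ x(t)ᵀPx(t) plus γ⁻¹‖z(t)‖² minus γ‖w(t)‖² is at most 0. Then for every T ≥ 0, √(∫₀ᵀ ‖z(t)‖² dt) ≤ γ·√(∫₀ᵀ ‖w(t)‖² dt) + √(γ·x(0)ᵀPx(0)). -/

import Mathlib

open Matrix intervalIntegral MeasureTheory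

private lemma sqrt_add_le' {a b : ℝ} (ha : 0 ≤ a) (hb : 0 ≤ b) :
    Real.sqrt (a + b) ≤ Real.sqrt a + Real.sqrt b := by
  have h : a + b ≤ (Real.sqrt a + Real.sqrt b) ^ 2 := by
    have := Real.sq_sqrt ha
    have := Real.sq_sqrt hb
    have : 0 ≤ Real.sqrt a * Real.sqrt b := by positivity
    nlinarith [Real.sq_sqrt ha, Real.sq_sqrt hb]
  calc Real.sqrt (a + b) ≤ Real.sqrt ((Real.sqrt a + Real.sqrt b) ^ 2) :=
        Real.sqrt_le_sqrt h
    _ = Real.sqrt a + Real.sqrt b := Real.sqrt_sq (by positivity)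

private lemma cont_dot {m : ℕ} {z : ℝ → Fin m → ℝ} (hz : Continuous z) :
    Continuous fun t => z t ⬝ᵥ z t := by
  simp only [dotProduct]
  exact continuous_finset_sum _ fun i _ =>
    ((continuous_apply i).comp hz).mul ((continuous_apply i).comp hz)

theorem L2_gain_bound (n l q : ℕ)
    (P : Matrix (Fin n) (Fin n) ℝ) (hPsymm : P.IsSymm)
    (hPpd : ∀ v : Fin n → ℝ, v ≠ 0 → 0 < v ⬝ᵥ P.mulVec v)
    (γ : ℝ) (hγ : 0 < γ)
    (x : ℝ → Fin n → ℝ) (hx : ∀ t, 0 ≤ t → DifferentiableAt ℝ x t)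
    (z : ℝ → Fin l → ℝ) (hz : Continuous z)
    (w : ℝ → Fin q → ℝ) (hw : Continuous w)
    (hdiss : ∀ t, 0 ≤ t →
      deriv (fun s => x s ⬝ᵥ P.mulVec (x s)) t + γ⁻¹ * (z t ⬝ᵥ z t)
        - γ * (w t ⬝ᵥ w t) ≤ 0) :
    ∀ T : ℝ, 0 ≤ T →
      Real.sqrt (∫ t in (0:ℝ)..T, z t ⬝ᵥ z t) ≤
        γ * Real.sqrt (∫ t in (0:ℝ)..T, w t ⬝ᵥ w t)
        + Real.sqrt (γ * (x 0 ⬝ᵥ P.mulVec (x 0))) := by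
  intro T hT
  set V : ℝ → ℝ := fun s => x s ⬝ᵥ P.mulVec (x s) with hV
  -- nonnegativity of V
  have hVnonneg : ∀ t, 0 ≤ V t := by
    intro t
    by_cases h : x t = 0
    · simp [hV, h]
    · exact (hPpd (x t) h).le
  -- differentiability of V at t ≥ 0
  have hVdiff : ∀ t, 0 ≤ t → DifferentiableAt ℝ V t := by
    intro t ht
    have hxc : ∀ i, DifferentiableAt ℝ (fun s => x s i) t := by
      intro i; exact (differentiableAt_pi.mp (hx t ht)) i
    have : V = fun s => ∑ i, x s i * ∑ k, P i k * x s k := by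
      funext s; simp [hV, dotProduct, mulVec]
    rw [this]
    exact DifferentiableAt.fun_sum fun i _ =>
      (hxc i).fun_mul (DifferentiableAt.fun_sum fun k _ => (hxc k).const_mul _)
  -- the integrand f
  set f : ℝ → ℝ := fun t => γ⁻¹ * (z t ⬝ᵥ z t) - γ * (w t ⬝ᵥ w t) with hf
  have hfc : Continuous f := by
    apply Continuous.sub
    · exact continuous_const.mul (cont_dot hz)
    · exact continuous_const.mul (cont_dot hw)
  set F : ℝ → ℝ := fun t => ∫ s in (0:ℝ)..t, f s with hF
  have hFd : ∀ t : ℝ, HasDerivAt F (f t) t := fun t =>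
    intervalIntegral.integral_hasDerivAt_right (hfc.intervalIntegrable _ _)
      (hfc.stronglyMeasurableAtFilter _ _) hfc.continuousAt
  -- g = V + F is antitone on [0, T]
  set g : ℝ → ℝ := fun t => V t + F t with hg
  have hanti : AntitoneOn g (Set.Icc 0 T) := by
    apply antitoneOn_of_deriv_nonpos (convex_Icc 0 T)
    · intro t ht
      exact ((hVdiff t ht.1).continuousAt.add (hFd t).continuousAt).continuousWithinAt
    · intro t ht
      rw [interior_Icc] at ht
      exact ((hVdiff t ht.1.le).add (hFd t).differentiableAt).differentiableWithinAt
    · intro t ht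
      rw [interior_Icc] at ht
      have hd : deriv g t = deriv V t + f t := by
        rw [hg]
        rw [deriv_fun_add (hVdiff t ht.1.le) (hFd t).differentiableAt, (hFd t).deriv]
      rw [hd]
      have := hdiss t ht.1.le
      simp only [hf]
      linarith
  have hkey : g T ≤ g 0 := hanti (Set.left_mem_Icc.mpr hT) ⟨hT, le_refl T⟩ hT
  have hF0 : F 0 = 0 := by simp [hF]
  -- split the integral
  have hzint : IntervalIntegrable (fun t => z t ⬝ᵥ z t) volume 0 T :=
    (cont_dot hz).intervalIntegrable _ _
  have hwint : IntervalIntegrable (fun t => w t ⬝ᵥ w t) volume 0 T :=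
    (cont_dot hw).intervalIntegrable _ _
  have hFT : F T = γ⁻¹ * (∫ t in (0:ℝ)..T, z t ⬝ᵥ z t)
      - γ * (∫ t in (0:ℝ)..T, w t ⬝ᵥ w t) := by
    show (∫ s in (0:ℝ)..T, γ⁻¹ * (z s ⬝ᵥ z s) - γ * (w s ⬝ᵥ w s)) = _
    rw [intervalIntegral.integral_sub (hzint.const_mul _) (hwint.const_mul _),
      intervalIntegral.integral_const_mul, intervalIntegral.integral_const_mul]
  set Iz := ∫ t in (0:ℝ)..T, z t ⬝ᵥ z t with hIz
  set Iw := ∫ t in (0:ℝ)..T, w t ⬝ᵥ w t with hIw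
  have hIznn : 0 ≤ Iz := intervalIntegral.integral_nonneg hT fun t _ =>
    Finset.sum_nonneg fun i _ => mul_self_nonneg _
  have hIwnn : 0 ≤ Iw := intervalIntegral.integral_nonneg hT fun t _ =>
    Finset.sum_nonneg fun i _ => mul_self_nonneg _
  have hmain : Iz ≤ γ ^ 2 * Iw + γ * V 0 := by
    have h1 : V T + (γ⁻¹ * Iz - γ * Iw) ≤ V 0 := by
      have := hkey
      simp only [hg, hF0, add_zero] at this
      rw [hFT] at this
      linarith
    have h2 : γ⁻¹ * Iz ≤ γ * Iw + V 0 := by linarith [hVnonneg T]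
    have h3 : Iz ≤ γ * (γ * Iw + V 0) := by
      rw [← inv_mul_le_iff₀ hγ] at *
      linarith
    nlinarith
  calc Real.sqrt Iz ≤ Real.sqrt (γ ^ 2 * Iw + γ * V 0) := Real.sqrt_le_sqrt hmain
    _ ≤ Real.sqrt (γ ^ 2 * Iw) + Real.sqrt (γ * V 0) :=
        sqrt_add_le' (by positivity) (mul_nonneg hγ.le (hVnonneg 0))
    _ = γ * Real.sqrt Iw + Real.sqrt (γ * V 0) := by
        rw [Real.sqrt_mul (by positivity), Real.sqrt_sq hγ.le]
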